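/- Let ω ∈ ℝ^{d+1}_{>0} with ω_0 ≤ ω_1 ≤ … ≤ ω_d, and let i < d. Then μ_i(S(ω)) ≤ [ (1/ω_0 + Σ_{k=i+1}^{d} 1/ω_k)·(Σ_{j=1}^{i} 1/ω_j) + Σ_{1 ≤ s < t ≤ i} 1/(ω_s ω_t) ] / ( Σ_{k=0}^{d} 1/ω_k ). -/

import Mathlib

open scoped Pointwise

/-- The `i`-th covering minimum of `K` with respect to a lattice given as a set `L`. -/
noncomputable def covMin {E : Type*} [AddCommGroup E] [Module ℝ E]
    (i : ℕ) (K L : Set E) : ℝ :=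
  sInf {μ : ℝ | 0 ≤ μ ∧ ∀ U : AffineSubspace ℝ E, (U : Set E).Nonempty →
    Module.finrank ℝ U.direction = Module.finrank ℝ E - i →
    ((μ • K + L) ∩ (U : Set E)).Nonempty}

/-- The integer lattice `ℤ^d` inside `ℝ^d`. -/
def intLat (d : ℕ) : Set (Fin d → ℝ) := {x | ∀ j, ∃ m : ℤ, x j = (m : ℝ)}

/-- The weighted terminal simplex `S(ω) = conv(-ω₀ 𝟙_d, ω₁ e_1, …, ω_d e_d) ⊆ ℝ^d`,
for `ω = (ω₀, …, ω_d)`. -/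
def wSimplex (d : ℕ) (ω : Fin (d + 1) → ℝ) : Set (Fin d → ℝ) :=
  convexHull ℝ (insert (fun _ => -ω 0) (Set.range fun j : Fin d => Pi.single j (ω j.succ)))

namespace CovAux

variable {d : ℕ}

/-- strict monotone maps between Fin's grow at least like identity -/
lemma strictMono_le_apply {m n : ℕ} {f : Fin m → Fin n} (hf : StrictMono f) (a : Fin m) :
    (a : ℕ) ≤ (f a : ℕ) := by
  have H : ∀ k, ∀ a : Fin m, (a : ℕ) = k → k ≤ (f a : ℕ) := by
    intro k
    induction k with
    | zero => intro a _; omega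
    | succ k ih =>
      intro a ha
      have hk : k < m := by omega
      have hlt : (⟨k, hk⟩ : Fin m) < a := by simp [Fin.lt_def]; omega
      have h1 := hf hlt
      have h2 := ih ⟨k, hk⟩ rfl
      rw [Fin.lt_def] at h1
      omega
  exact H _ a rfl

/-- existence of a coordinate complement -/
lemma exists_coord_complement (n : ℕ) :
    ∀ (V : Submodule ℝ (Fin d → ℝ)), d ≤ Module.finrank ℝ V + n →
    ∃ I : Finset (Fin d), I.card ≤ n ∧
      V ⊔ Submodule.span ℝ ((fun k => Pi.single k (1:ℝ)) '' (I : Set (Fin d))) = ⊤ := by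
  induction n with
  | zero =>
    intro V hV
    refine ⟨∅, le_rfl, ?_⟩
    have h1 : Module.finrank ℝ V = d := le_antisymm
      (by simpa [Module.finrank_pi] using Submodule.finrank_le V) (by omega)
    have : V = ⊤ := Submodule.eq_top_of_finrank_eq (by simpa [Module.finrank_pi] using h1)
    simp [this]
  | succ n ih =>
    intro V hV
    by_cases htop : V = ⊤
    · exact ⟨∅, by simp, by simp [htop]⟩
    · have hex : ∃ j : Fin d, Pi.single j (1:ℝ) ∉ V := by
        by_contra h
        push_neg at h
        apply htop
        rw [eq_top_iff, ← (Pi.basisFun ℝ (Fin d)).span_eq, Submodule.span_le]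
        rintro x ⟨j, rfl⟩
        simpa [Pi.basisFun_apply] using h j
      obtain ⟨j, hj⟩ := hex
      set V' := V ⊔ Submodule.span ℝ {Pi.single j (1:ℝ)} with hV'
      have hlt : V < V' := by
        refine lt_of_le_of_ne le_sup_left (fun h => hj ?_)
        rw [h]
        exact Submodule.mem_sup_right (Submodule.mem_span_singleton_self _)
      have hrank : Module.finrank ℝ V + 1 ≤ Module.finrank ℝ V' :=
        Submodule.finrank_lt_finrank_of_lt hlt
      obtain ⟨I, hIcard, hIspan⟩ := ih V' (by omega)
      refine ⟨insert j I, ?_, ?_⟩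
      · exact le_trans (Finset.card_insert_le _ _) (by omega)
      · rw [eq_top_iff, ← hIspan]
        have hs1 : Submodule.span ℝ ((fun k => Pi.single k (1:ℝ)) '' (I : Set (Fin d))) ≤
            Submodule.span ℝ ((fun k => Pi.single k (1:ℝ)) '' ((insert j I : Finset (Fin d)) : Set (Fin d))) := by
          apply Submodule.span_mono
          apply Set.image_mono
          simp [Finset.coe_insert, Set.subset_insert]
        have hs2 : Submodule.span ℝ {Pi.single j (1:ℝ)} ≤
            Submodule.span ℝ ((fun k => Pi.single k (1:ℝ)) '' ((insert j I : Finset (Fin d)) : Set (Fin d))) := by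
          apply Submodule.span_mono
          simp only [Set.singleton_subset_iff, Finset.coe_insert]
          exact ⟨j, Set.mem_insert _ _, rfl⟩
        exact sup_le (sup_le le_sup_left (hs2.trans le_sup_right)) (hs1.trans le_sup_right)

/-- V-description from H-description for the weighted simplex. -/
lemma mem_wSimplex (ω : Fin (d + 1) → ℝ) (hω : ∀ j, 0 < ω j)
    (x : Fin d → ℝ)
    (h1 : ∑ k : Fin d, x k * (ω k.succ)⁻¹ ≤ 1)
    (h2 : ∀ k : Fin d, ∑ k : Fin d, x k * (ω k.succ)⁻¹ - 1 ≤ (∑ k : Fin (d+1), (ω k)⁻¹) * x k) :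
    x ∈ wSimplex d ω := by
  set W := ∑ k : Fin (d+1), (ω k)⁻¹ with hW
  set f := ∑ k : Fin d, x k * (ω k.succ)⁻¹ with hf
  have hWpos : 0 < W := Finset.sum_pos (fun k _ => inv_pos.2 (hω k)) ⟨0, Finset.mem_univ 0⟩
  have hω0 : 0 < ω 0 := hω 0
  set l0 : ℝ := (1 - f) / (ω 0 * W) with hl0
  have hl0w : l0 * (ω 0 * W) = 1 - f := by
    rw [hl0, div_mul_cancel₀]
    positivity
  have hl0nn : 0 ≤ l0 := by
    apply div_nonneg (by linarith) (by positivity)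
  set lam : Fin (d+1) → ℝ := Fin.cases l0 (fun j => (x j + l0 * ω 0) * (ω j.succ)⁻¹) with hlam
  set p : Fin (d+1) → (Fin d → ℝ) :=
    Fin.cases (fun _ => -ω 0) (fun j => Pi.single j (ω j.succ)) with hp
  have hWsplit : W = (ω 0)⁻¹ + ∑ j : Fin d, (ω j.succ)⁻¹ := by
    rw [hW, Fin.sum_univ_succ]
  have hlamnn : ∀ t : Fin (d+1), 0 ≤ lam t := by
    intro t
    induction t using Fin.cases with
    | zero => simpa [hlam] using hl0nn
    | succ j =>
      simp only [hlam, Fin.cases_succ]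
      apply mul_nonneg _ (le_of_lt (inv_pos.2 (hω j.succ)))
      have := h2 j
      have : -(1 - f) / W ≤ x j := by
        rw [div_le_iff₀ hWpos] at *
        nlinarith
      have hle : l0 * ω 0 = (1 - f) / W := by
        rw [hl0]
        field_simp
      rw [hle]
      have : -((1-f)/W) ≤ x j := by rw [neg_div] at this; exact this
      linarith
  have hsum1 : ∑ t : Fin (d+1), lam t = 1 := by
    rw [Fin.sum_univ_succ]
    simp only [hlam, Fin.cases_zero, Fin.cases_succ]
    have : ∑ j : Fin d, (x j + l0 * ω 0) * (ω j.succ)⁻¹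
        = f + (l0 * ω 0) * ∑ j : Fin d, (ω j.succ)⁻¹ := by
      rw [hf, Finset.mul_sum, ← Finset.sum_add_distrib]
      apply Finset.sum_congr rfl
      intro k _
      ring
    rw [this]
    have h0 : (ω 0) * (ω 0)⁻¹ = 1 := mul_inv_cancel₀ (ne_of_gt hω0)
    have hs : ∑ j : Fin d, (ω j.succ)⁻¹ = W - (ω 0)⁻¹ := by rw [hWsplit]; ring
    rw [hs]
    nlinarith [hl0w]
  have hcomb : ∑ t : Fin (d+1), lam t • p t = x := by
    funext k
    rw [Finset.sum_apply]
    rw [Fin.sum_univ_succ]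
    simp only [hlam, hp, Fin.cases_zero, Fin.cases_succ, Pi.smul_apply, smul_eq_mul]
    have hsing : ∀ j : Fin d, (Pi.single j (ω j.succ) : Fin d → ℝ) k = if j = k then ω j.succ else 0 := by
      intro j
      rw [Pi.single_apply]
      simp [eq_comm]
    have : ∑ j : Fin d, (x j + l0 * ω 0) * (ω j.succ)⁻¹ * (Pi.single j (ω j.succ) : Fin d → ℝ) k
        = (x k + l0 * ω 0) * (ω k.succ)⁻¹ * ω k.succ := by
      rw [Finset.sum_eq_single k]
      · rw [hsing k]; simp
      · intro j _ hj
        rw [hsing j]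
        simp [hj]
      · intro h
        exact absurd (Finset.mem_univ k) h
    rw [this]
    have h0 : (ω k.succ)⁻¹ * ω k.succ = 1 := inv_mul_cancel₀ (ne_of_gt (hω k.succ))
    rw [mul_assoc, h0]
    ring
  rw [← hcomb]
  apply (convex_convexHull ℝ _).sum_mem (fun t _ => hlamnn t) hsum1
  intro t _
  apply subset_convexHull
  induction t using Fin.cases with
  | zero => simp [hp]
  | succ j =>
    simp only [hp, Fin.cases_succ]
    exact Set.mem_insert_iff.2 (Or.inr ⟨j, rfl⟩)

lemma exists_lattice_point (ω : Fin (d+1) → ℝ) (hω : ∀ j, 0 < ω j)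
    (I : Finset (Fin d)) (x : Fin d → ℝ) (hx : ∀ k, k ∉ I → x k = 0) (μ : ℝ)
    (hμ : (∑ k : Fin (d+1), (ω k)⁻¹) * (∑ k ∈ I, (ω k.succ)⁻¹)
      - ((∑ k ∈ I, (ω k.succ)⁻¹)^2 + ∑ k ∈ I, ((ω k.succ)⁻¹)^2)/2
      ≤ μ * (∑ k : Fin (d+1), (ω k)⁻¹)) :
    ∃ z : Fin d → ℤ,
      (∑ k : Fin d, (x k - z k) * (ω k.succ)⁻¹ ≤ μ) ∧
      ∀ k : Fin d, (∑ j : Fin d, (x j - z j) * (ω j.succ)⁻¹) - μ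
        ≤ (∑ k : Fin (d+1), (ω k)⁻¹) * (x k - z k) := by
  set W := ∑ k : Fin (d+1), (ω k)⁻¹ with hWdef
  set u : Fin d → ℝ := fun k => (ω k.succ)⁻¹ with hudef
  set ρ : Fin d → ℝ := fun k => Int.fract (x k) with hrdef
  set σ := ∑ k ∈ I, u k with hsdef
  set q := ∑ k ∈ I, (u k)^2 with hqdef
  set A := ∑ k ∈ I, ρ k * u k with hAdef
  have hu : ∀ k, 0 < u k := fun k => inv_pos.2 (hω k.succ)
  have hWpos : 0 < W := Finset.sum_pos (fun k _ => inv_pos.2 (hω k)) ⟨0, Finset.mem_univ 0⟩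
  have hWσ : σ + (ω 0)⁻¹ ≤ W := by
    have h1 : W = (ω 0)⁻¹ + ∑ j : Fin d, u j := by rw [hWdef, Fin.sum_univ_succ]
    have h2 : σ ≤ ∑ j : Fin d, u j :=
      Finset.sum_le_sum_of_subset_of_nonneg (Finset.subset_univ I)
        (fun k _ _ => le_of_lt (hu k))
    linarith
  have hWσpos : 0 < W - σ := by
    have := inv_pos.2 (hω 0)
    linarith
  by_contra hcon
  push_neg at hcon
  -- candidate 0
  set z0 : Fin d → ℤ := fun k => if k ∈ I then ⌊x k⌋ else 0 with hz0
  have hs0 : ∑ k : Fin d, (x k - z0 k) * u k = A := by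
    have he : ∀ k ∈ Finset.univ, (x k - (z0 k : ℝ)) * u k
        = if k ∈ I then ρ k * u k else 0 := by
      intro k _
      by_cases h : k ∈ I
      · simp only [hz0, h, if_true, hrdef, Int.fract]
      · simp [hz0, h, hx k h]
    rw [Finset.sum_congr rfl he, Finset.sum_ite_mem, Finset.univ_inter]
  have hA : μ < A := by
    by_contra hA'
    push_neg at hA'
    rw [← hs0] at hA'
    obtain ⟨k, hk⟩ := hcon z0 hA'
    rw [hs0] at hk hA'
    have hy : (0:ℝ) ≤ x k - z0 k := by
      by_cases h : k ∈ I
      · simp only [hz0, h, if_true]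
        have := Int.fract_nonneg (x k)
        rw [Int.fract] at this
        push_cast
        linarith
      · simp [hz0, h, hx k h]
    nlinarith
  -- candidates a ∈ I
  have hFa : ∀ a ∈ I, W * (ρ a - 1) < A - (∑ k ∈ I, if ρ a ≤ ρ k then u k else 0) - μ := by
    intro a ha
    by_contra hle
    push_neg at hle
    set za : Fin d → ℤ := fun k => if k ∈ I then ⌊x k⌋ + (if ρ a ≤ ρ k then 1 else 0) else 0
      with hza
    have hsa : ∑ k : Fin d, (x k - za k) * u k
        = A - (∑ k ∈ I, if ρ a ≤ ρ k then u k else 0) := by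
      have he : ∀ k ∈ Finset.univ, (x k - (za k : ℝ)) * u k
          = (if k ∈ I then ρ k * u k else 0) - (if k ∈ I then (if ρ a ≤ ρ k then u k else 0) else 0) := by
        intro k _
        by_cases h : k ∈ I
        · by_cases h2 : ρ a ≤ ρ k
          · simp only [hza, h, h2, if_true]
            push_cast
            simp only [hrdef, Int.fract]
            ring
          · simp only [hza, h, h2, if_true, if_false]
            push_cast
            simp only [hrdef, Int.fract]
            ring
        · simp [hza, h, hx k h]
      rw [Finset.sum_congr rfl he, Finset.sum_sub_distrib, Finset.sum_ite_mem,
        Finset.sum_ite_mem, Finset.univ_inter]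
    have hρa1 : ρ a - 1 < 0 := by
      have := Int.fract_lt_one (x a)
      simp only [hrdef]
      linarith
    have hfr : ∀ k, x k - (⌊x k⌋ : ℝ) = ρ k := by
      intro k
      simp only [hrdef]
      rw [Int.self_sub_floor]
    have hr0 : ∀ k, (0:ℝ) ≤ ρ k := fun k => Int.fract_nonneg (x k)
    have hr1 : ∀ k, ρ k < 1 := fun k => Int.fract_lt_one (x k)
    have hyk : ∀ k, ρ a - 1 ≤ x k - za k := by
      intro k
      by_cases h : k ∈ I
      · by_cases h2 : ρ a ≤ ρ k
        · have hz : ((za k : ℤ) : ℝ) = (⌊x k⌋ : ℝ) + 1 := by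
            simp [hza, h, h2]
          rw [hz]
          have := hfr k
          linarith
        · have hz : ((za k : ℤ) : ℝ) = (⌊x k⌋ : ℝ) := by
            simp [hza, h, h2]
          rw [hz, hfr k]
          have := hr0 k
          have := hr1 a
          linarith
      · have hz : ((za k : ℤ) : ℝ) = 0 := by simp [hza, h]
        rw [hz, hx k h]
        have := hr1 a
        linarith
    have hsum_le : ∑ k : Fin d, (x k - za k) * u k ≤ μ := by
      rw [hsa]
      nlinarith
    obtain ⟨k, hk⟩ := hcon za hsum_le
    rw [hsa] at hk
    have : W * (ρ a - 1) ≤ W * (x k - za k) :=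
      mul_le_mul_of_nonneg_left (hyk k) (le_of_lt hWpos)
    linarith
  -- sum the failures
  set Q : Fin d → ℝ := fun a => ∑ k ∈ I, if ρ a ≤ ρ k then u k else 0 with hQdef
  set D := ∑ a ∈ I, u a * Q a with hDdef
  have hsum : W * A - W * σ ≤ A * σ - D - μ * σ := by
    have h1 : ∀ a ∈ I, u a * (W * (ρ a - 1)) ≤ u a * (A - Q a - μ) :=
      fun a ha => mul_le_mul_of_nonneg_left (le_of_lt (hFa a ha)) (le_of_lt (hu a))
    have h2 := Finset.sum_le_sum h1
    have hL : ∑ a ∈ I, u a * (W * (ρ a - 1)) = W * A - W * σ := by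
      have : ∀ a ∈ I, u a * (W * (ρ a - 1)) = W * (ρ a * u a) - W * u a := by
        intro a _; ring
      rw [Finset.sum_congr rfl this, Finset.sum_sub_distrib, ← Finset.mul_sum,
        ← Finset.mul_sum, ← hAdef, ← hsdef]
    have hR : ∑ a ∈ I, u a * (A - Q a - μ) = A * σ - D - μ * σ := by
      have : ∀ a ∈ I, u a * (A - Q a - μ) = A * u a - u a * Q a - μ * u a := by
        intro a _; ring
      rw [Finset.sum_congr rfl this, Finset.sum_sub_distrib, Finset.sum_sub_distrib,
        ← Finset.mul_sum, ← Finset.mul_sum, ← hDdef, ← hsdef]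
    rw [hL, hR] at h2
    exact h2
  have hD : (σ^2 + q)/2 ≤ D := by
    have hDexp : D = ∑ a ∈ I, ∑ k ∈ I, (if ρ a ≤ ρ k then u a * u k else 0) := by
      apply Finset.sum_congr rfl
      intro a _
      rw [hQdef, Finset.mul_sum]
      apply Finset.sum_congr rfl
      intro k _
      rw [mul_ite, mul_zero]
    have hDswap : D = ∑ a ∈ I, ∑ k ∈ I, (if ρ k ≤ ρ a then u a * u k else 0) := by
      rw [hDexp, Finset.sum_comm]
      apply Finset.sum_congr rfl
      intro a _
      apply Finset.sum_congr rfl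
      intro k _
      rw [mul_comm]
    have hσ2 : σ^2 = ∑ a ∈ I, ∑ k ∈ I, u a * u k := by
      rw [hsdef, sq, Finset.sum_mul_sum]
    have hq' : q = ∑ a ∈ I, ∑ k ∈ I, (if a = k then u a * u k else 0) := by
      rw [hqdef]
      apply Finset.sum_congr rfl
      intro a ha
      rw [Finset.sum_ite_eq I a (fun k => u a * u k)]
      simp [ha, sq]
    have hptwise : σ^2 + q ≤ D + D := by
      rw [hσ2, hq']
      nth_rewrite 2 [hDswap]
      nth_rewrite 1 [hDexp]
      rw [← Finset.sum_add_distrib, ← Finset.sum_add_distrib]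
      apply Finset.sum_le_sum
      intro a _
      rw [← Finset.sum_add_distrib, ← Finset.sum_add_distrib]
      apply Finset.sum_le_sum
      intro k _
      rcases eq_or_ne a k with h | h
      · subst h; simp
      · have hup : 0 ≤ u a * u k := le_of_lt (mul_pos (hu a) (hu k))
        rcases le_total (ρ a) (ρ k) with h2 | h2 <;> simp [h, h2] <;> split <;> linarith
    linarith
  have hstep : μ * (W - σ) < A * (W - σ) := mul_lt_mul_of_pos_right hA hWσpos
  nlinarith [hμ, hD, hsum, hstep]

/-- sum of squares splitting identity -/
lemma sq_sum_identity {α : Type*} [LinearOrder α] (F : Finset α) (a : α → ℝ) :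
    (∑ s ∈ F, a s)^2 = (∑ s ∈ F, (a s)^2)
      + 2 * ∑ s ∈ F, ∑ t ∈ F.filter (fun t => s < t), a s * a t := by
  classical
  induction F using Finset.induction_on_max with
  | empty => simp
  | insert x F hmax ih =>
    have hx : x ∉ F := fun h => lt_irrefl x (hmax x h)
    rw [Finset.sum_insert hx, Finset.sum_insert hx, Finset.sum_insert hx]
    have h1 : (insert x F).filter (fun t => x < t) = ∅ := by
      apply Finset.filter_eq_empty_iff.2
      intro t ht
      rcases Finset.mem_insert.1 ht with rfl | ht'
      · exact lt_irrefl t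
      · exact not_lt_of_gt (hmax t ht')
    have h2 : ∀ s ∈ F, (insert x F).filter (fun t => s < t)
        = insert x (F.filter (fun t => s < t)) := by
      intro s hs
      rw [Finset.filter_insert, if_pos (hmax s hs)]
    have h3 : ∑ s ∈ F, ∑ t ∈ (insert x F).filter (fun t => s < t), a s * a t
        = ∑ s ∈ F, (a s * a x + ∑ t ∈ F.filter (fun t => s < t), a s * a t) := by
      apply Finset.sum_congr rfl
      intro s hs
      rw [h2 s hs, Finset.sum_insert (fun h => hx (Finset.mem_of_mem_filter x h))]
    rw [h1, h3, Finset.sum_add_distrib]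
    have h4 : ∑ s ∈ F, a s * a x = (∑ s ∈ F, a s) * a x := by
      rw [Finset.sum_mul]
    rw [h4, Finset.sum_empty]
    nlinarith [ih]

/-- comparison inequality -/
lemma comp_ineq {n : ℕ} (ua va : Fin n → ℝ) (W c : ℝ)
    (h0 : ∀ a, 0 ≤ ua a) (h1 : ∀ a, ua a ≤ va a) (h2 : ∀ a, va a ≤ c)
    (hW : (∑ a, va a) + c ≤ W) :
    W * (∑ a, ua a) - ((∑ a, ua a)^2 + ∑ a, (ua a)^2)/2
      ≤ W * (∑ a, va a) - ((∑ a, va a)^2 + ∑ a, (va a)^2)/2 := by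
  set s := ∑ a, ua a with hs
  set t := ∑ a, va a with ht
  have hst : s ≤ t := Finset.sum_le_sum (fun a _ => h1 a)
  have expand : ∑ a, (va a - ua a) * ((W - (t+s)/2) - (va a + ua a)/2)
      = (W - (t+s)/2) * (t - s) - ((∑ a, (va a)^2) - ∑ a, (ua a)^2)/2 := by
    have h : ∀ a ∈ Finset.univ, (va a - ua a) * ((W - (t+s)/2) - (va a + ua a)/2)
        = (W - (t+s)/2) * va a - (W - (t+s)/2) * ua a - ((va a)^2/2 - (ua a)^2/2) :=
      fun a _ => by ring
    rw [Finset.sum_congr rfl h, Finset.sum_sub_distrib, Finset.sum_sub_distrib,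
      ← Finset.mul_sum, ← Finset.mul_sum, Finset.sum_sub_distrib,
      ← Finset.sum_div, ← Finset.sum_div, ← hs, ← ht]
    ring
  have nonneg : 0 ≤ ∑ a, (va a - ua a) * ((W - (t+s)/2) - (va a + ua a)/2) := by
    apply Finset.sum_nonneg
    intro a _
    apply mul_nonneg
    · linarith [h1 a]
    · have := h2 a
      have := h1 a
      have := h0 a
      linarith
  rw [expand] at nonneg
  nlinarith

/-- sum over a finset via its order embedding -/
lemma sum_emb {β : Type*} [LinearOrder β] {n : ℕ} (I : Finset β) (h : I.card = n)
    (f : β → ℝ) :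
    ∑ k ∈ I, f k = ∑ a : Fin n, f (I.orderEmbOfFin h a) := by
  classical
  exact (Finset.sum_bij (fun (a : Fin n) _ => I.orderEmbOfFin h a)
    (fun a _ => Finset.orderEmbOfFin_mem I h a)
    (fun a _ b _ hab => (I.orderEmbOfFin h).injective hab)
    (fun b hb => by
      have : b ∈ Set.range (I.orderEmbOfFin h) := by
        rw [Finset.range_orderEmbOfFin]
        exact hb
      obtain ⟨a, ha⟩ := this
      exact ⟨a, Finset.mem_univ a, ha⟩)
    (fun a _ => rfl)).symm

/-- sum over the filter {1 ≤ j ≤ i} via Fin i -/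
lemma sum_F_eq {d : ℕ} (i : ℕ) (hid : i < d) (f : Fin (d+1) → ℝ) :
    ∑ j ∈ Finset.univ.filter (fun j : Fin (d+1) => 1 ≤ (j:ℕ) ∧ (j:ℕ) ≤ i), f j
      = ∑ a : Fin i, f ⟨(a:ℕ)+1, by omega⟩ := by
  apply (Finset.sum_bij (fun (a : Fin i) (_ : a ∈ Finset.univ) => (⟨(a:ℕ)+1, by omega⟩ : Fin (d+1)))
    ?_ ?_ ?_ ?_).symm
  · intro a _
    simp only [Finset.mem_filter, Finset.mem_univ, true_and]
    constructor
    · omega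
    · exact Nat.succ_le_of_lt a.2
  · intro a _ b _ hab
    have : (a:ℕ) + 1 = (b:ℕ) + 1 := by
      have := congrArg Fin.val hab
      simpa using this
    exact Fin.ext (by omega)
  · intro b hb
    simp only [Finset.mem_filter, Finset.mem_univ, true_and] at hb
    refine ⟨⟨(b:ℕ) - 1, by omega⟩, Finset.mem_univ _, ?_⟩
    apply Fin.ext
    simp
    omega
  · intro a _
    rfl

end CovAux

set_option maxHeartbeats 1000000 in
open CovAux in
theorem covMin_wSimplex_le_intersection_bound
    (d i : ℕ) (hid : i < d)
    (ω : Fin (d + 1) → ℝ) (hω : ∀ j, 0 < ω j) (hmono : Monotone ω) :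
    covMin i (wSimplex d ω) (intLat d) ≤
      (((ω 0)⁻¹ + ∑ k ∈ Finset.univ.filter (fun k : Fin (d + 1) => i + 1 ≤ (k : ℕ)), (ω k)⁻¹) *
          (∑ j ∈ Finset.univ.filter
            (fun j : Fin (d + 1) => 1 ≤ (j : ℕ) ∧ (j : ℕ) ≤ i), (ω j)⁻¹) +
        ∑ s ∈ Finset.univ.filter (fun s : Fin (d + 1) => 1 ≤ (s : ℕ) ∧ (s : ℕ) ≤ i),
          ∑ t ∈ Finset.univ.filter
            (fun t : Fin (d + 1) => (s : ℕ) < (t : ℕ) ∧ (t : ℕ) ≤ i), (ω s * ω t)⁻¹) /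
      (∑ k : Fin (d + 1), (ω k)⁻¹) := by
  classical
  set W := ∑ k : Fin (d+1), (ω k)⁻¹ with hWdef
  set F : Finset (Fin (d+1)) :=
    Finset.univ.filter (fun j : Fin (d+1) => 1 ≤ (j:ℕ) ∧ (j:ℕ) ≤ i) with hFdef
  set σF := ∑ j ∈ F, (ω j)⁻¹ with hsFdef
  set T1 := ∑ k ∈ Finset.univ.filter (fun k : Fin (d+1) => i + 1 ≤ (k:ℕ)), (ω k)⁻¹ with hT1def
  set psF := ∑ s ∈ F, ∑ t ∈ Finset.univ.filter
      (fun t : Fin (d+1) => (s:ℕ) < (t:ℕ) ∧ (t:ℕ) ≤ i), (ω s * ω t)⁻¹ with hpsdef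
  set qF := ∑ j ∈ F, ((ω j)⁻¹)^2 with hqFdef
  set B := (((ω 0)⁻¹ + T1) * σF + psF) / W with hBdef
  show covMin i (wSimplex d ω) (intLat d) ≤ B
  have hWpos : 0 < W := Finset.sum_pos (fun k _ => inv_pos.2 (hω k)) ⟨0, Finset.mem_univ 0⟩
  have hσF0 : 0 ≤ σF := Finset.sum_nonneg fun j _ => inv_nonneg.2 (le_of_lt (hω j))
  have hT10 : 0 ≤ T1 := Finset.sum_nonneg fun j _ => inv_nonneg.2 (le_of_lt (hω j))
  have hps0 : 0 ≤ psF := Finset.sum_nonneg fun s _ => Finset.sum_nonneg fun t _ =>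
    inv_nonneg.2 (le_of_lt (mul_pos (hω s) (hω t)))
  have hω00 : 0 < (ω 0)⁻¹ := inv_pos.2 (hω 0)
  have hB0 : 0 ≤ B := by
    apply div_nonneg _ (le_of_lt hWpos)
    nlinarith
  -- partition identity
  have hpart : W = (ω 0)⁻¹ + σF + T1 := by
    have e1 := Finset.sum_filter_add_sum_filter_not Finset.univ
      (fun j : Fin (d+1) => 1 ≤ (j:ℕ) ∧ (j:ℕ) ≤ i) (fun k => (ω k)⁻¹)
    have e2 : Finset.univ.filter (fun k : Fin (d+1) => ¬(1 ≤ (k:ℕ) ∧ (k:ℕ) ≤ i))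
        = insert (0 : Fin (d+1)) (Finset.univ.filter (fun k : Fin (d+1) => i + 1 ≤ (k:ℕ))) := by
      ext k
      simp only [Finset.mem_filter, Finset.mem_univ, true_and, Finset.mem_insert,
        Fin.ext_iff, Fin.val_zero]
      omega
    rw [e2, Finset.sum_insert (by simp)] at e1
    rw [hWdef, hsFdef, hT1def]
    linarith [e1]
  -- pair sum identity
  have hps2 : σF^2 = qF + 2 * psF := by
    have e0 := sq_sum_identity F (fun j => (ω j)⁻¹)
    have e2 : psF = ∑ s ∈ F, ∑ t ∈ F.filter (fun t => s < t), (ω s)⁻¹ * (ω t)⁻¹ := by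
      rw [hpsdef]
      apply Finset.sum_congr rfl
      intro s hs
      have hs' := (Finset.mem_filter.1 (hFdef ▸ hs)).2
      have e1 : (Finset.univ.filter (fun t : Fin (d+1) => (s:ℕ) < (t:ℕ) ∧ (t:ℕ) ≤ i))
          = F.filter (fun t => s < t) := by
        ext t
        simp only [Finset.mem_filter, Finset.mem_univ, true_and, hFdef, Fin.lt_def]
        omega
      rw [e1]
      apply Finset.sum_congr rfl
      intro t _
      rw [mul_inv]
    rw [hsFdef, hqFdef, e2]
    linarith [e0]
  -- numerator identity
  have hN : ((ω 0)⁻¹ + T1) * σF + psF = W * σF - (σF^2 + qF)/2 := by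
    have e1 : (ω 0)⁻¹ + T1 = W - σF := by linarith
    rw [e1]
    nlinarith [hps2]
  have hBW : B * W = W * σF - (σF^2 + qF)/2 := by
    rw [hBdef, div_mul_cancel₀ _ (ne_of_gt hWpos), hN]
  apply csInf_le ⟨0, fun μ hμ => hμ.1⟩
  refine ⟨hB0, ?_⟩
  intro U hUne hUdim
  have hdimE : Module.finrank ℝ (Fin d → ℝ) = d := by simp [Module.finrank_pi]
  rw [hdimE] at hUdim
  by_cases hi : i = 0
  · -- trivial case: U is everything
    have hdir : U.direction = ⊤ := by
      apply Submodule.eq_top_of_finrank_eq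
      rw [hUdim, hdimE, hi]
      simp
    obtain ⟨x₀, hx₀⟩ := hUne
    have hv : (fun _ => -ω 0) ∈ wSimplex d ω :=
      subset_convexHull _ _ (Set.mem_insert _ _)
    refine ⟨B • (fun _ => -ω 0) + 0, Set.add_mem_add (Set.smul_mem_smul_set hv) ?_, ?_⟩
    · intro j; exact ⟨0, by simp⟩
    · have hmem : (B • (fun _ => -ω 0) + 0) - x₀ ∈ U.direction := by rw [hdir]; trivial
      have := AffineSubspace.vadd_mem_of_mem_direction hmem hx₀
      simpa [vadd_eq_add, sub_add_cancel] using this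
  · -- main case
    obtain ⟨I0, hI0card, hI0span⟩ := exists_coord_complement i U.direction
      (by rw [hUdim]; omega)
    obtain ⟨I, hI0I, hIcard⟩ := Finset.exists_superset_card_eq hI0card
      (by simpa using le_of_lt hid)
    have hspan : U.direction ⊔
        Submodule.span ℝ ((fun k => Pi.single k (1:ℝ)) '' (I : Set (Fin d))) = ⊤ := by
      rw [eq_top_iff, ← hI0span]
      exact sup_le_sup le_rfl (Submodule.span_mono (Set.image_mono (by exact_mod_cast hI0I)))
    obtain ⟨x₀, hx₀⟩ := hUne
    have hx₀mem : x₀ ∈ U.direction ⊔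
        Submodule.span ℝ ((fun k => Pi.single k (1:ℝ)) '' (I : Set (Fin d))) := by
      rw [hspan]; trivial
    obtain ⟨v, hv, c, hc, hvc⟩ := Submodule.mem_sup.1 hx₀mem
    have hxU : c ∈ U := by
      have h1 : (-v) +ᵥ x₀ ∈ U := AffineSubspace.vadd_mem_of_mem_direction (neg_mem hv) hx₀
      have h2 : (-v) +ᵥ x₀ = c := by
        rw [vadd_eq_add, ← hvc]; abel
      rwa [h2] at h1
    have hxoff : ∀ k, k ∉ I → c k = 0 := by
      set P : Submodule ℝ (Fin d → ℝ) :=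
        { carrier := {y | ∀ k, k ∉ I → y k = 0}
          add_mem' := by
            intro a b ha hb k hk
            show (a + b) k = 0
            rw [Pi.add_apply, ha k hk, hb k hk, add_zero]
          zero_mem' := by intro k _; rfl
          smul_mem' := by
            intro r a ha k hk
            show (r • a) k = 0
            rw [Pi.smul_apply, ha k hk, smul_zero] } with hPdef
      have hsub : Submodule.span ℝ ((fun k => Pi.single k (1:ℝ)) '' (I : Set (Fin d))) ≤ P := by
        rw [Submodule.span_le]
        rintro y ⟨k, hk, rfl⟩
        intro j hj
        have hne : j ≠ k := fun h => hj (h ▸ Finset.mem_coe.1 hk)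
        exact Pi.single_eq_of_ne hne 1
      exact fun k hk => (hsub hc) k hk
    -- positivity of B
    have h1F : (⟨1, by omega⟩ : Fin (d+1)) ∈ F := by
      simp only [hFdef, Finset.mem_filter, Finset.mem_univ, true_and]
      exact ⟨Nat.le_refl 1, by omega⟩
    have hσFpos : 0 < σF :=
      Finset.sum_pos' (fun j _ => inv_nonneg.2 (le_of_lt (hω j)))
        ⟨_, h1F, inv_pos.2 (hω _)⟩
    have hBpos : 0 < B := by
      apply div_pos _ hWpos
      nlinarith
    -- key inequality for exists_lattice_point
    have hkey : W * (∑ k ∈ I, (ω k.succ)⁻¹)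
        - ((∑ k ∈ I, (ω k.succ)⁻¹)^2 + ∑ k ∈ I, ((ω k.succ)⁻¹)^2)/2 ≤ B * W := by
      rw [hBW]
      have hc1 : ∑ k ∈ I, (ω k.succ)⁻¹
          = ∑ a : Fin i, (ω (I.orderEmbOfFin hIcard a).succ)⁻¹ := sum_emb I hIcard _
      have hc2 : ∑ k ∈ I, ((ω k.succ)⁻¹)^2
          = ∑ a : Fin i, ((ω (I.orderEmbOfFin hIcard a).succ)⁻¹)^2 := sum_emb I hIcard _
      have hc3 : σF = ∑ a : Fin i, (ω ⟨(a:ℕ)+1, by omega⟩)⁻¹ := by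
        rw [hsFdef]; exact sum_F_eq i hid _
      have hc4 : qF = ∑ a : Fin i, ((ω ⟨(a:ℕ)+1, by omega⟩)⁻¹)^2 := by
        rw [hqFdef]; exact sum_F_eq i hid _
      rw [hc1, hc2, hc3, hc4]
      apply comp_ineq _ _ W ((ω 0)⁻¹)
      · intro a
        exact inv_nonneg.2 (le_of_lt (hω _))
      · intro a
        apply inv_anti₀ (hω _)
        apply hmono
        rw [Fin.le_def]
        simp only [Fin.val_succ]
        have := strictMono_le_apply (I.orderEmbOfFin hIcard).strictMono a
        omega
      · intro a
        apply inv_anti₀ (hω 0)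
        apply hmono
        exact Fin.zero_le _
      · rw [← hc3]
        linarith [hT10, hpart]
    obtain ⟨z, hz1, hz2⟩ := exists_lattice_point ω hω I c hxoff B hkey
    set y : Fin d → ℝ := fun k => c k - (z k : ℝ) with hydef
    have hyS : y ∈ B • wSimplex d ω := by
      have hsum : ∀ r : ℝ, ∑ k : Fin d, (r • y) k * (ω k.succ)⁻¹
          = r * ∑ k : Fin d, y k * (ω k.succ)⁻¹ := by
        intro r
        rw [Finset.mul_sum]
        apply Finset.sum_congr rfl
        intro k _
        simp [Pi.smul_apply, smul_eq_mul]
        ring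
      have hBinv : B⁻¹ * B = 1 := inv_mul_cancel₀ (ne_of_gt hBpos)
      have hBinv0 : 0 ≤ B⁻¹ := le_of_lt (inv_pos.2 hBpos)
      have hw : (B⁻¹ • y) ∈ wSimplex d ω := by
        apply mem_wSimplex ω hω
        · rw [hsum]
          have := mul_le_mul_of_nonneg_left hz1 hBinv0
          linarith [this, hBinv]
        · intro k
          rw [hsum]
          have h2 := hz2 k
          have h3 := mul_le_mul_of_nonneg_left h2 hBinv0
          have : (B⁻¹ • y) k = B⁻¹ * y k := by simp [Pi.smul_apply, smul_eq_mul]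
          rw [this]
          nlinarith [h3, hBinv]
      have hBy : B • (B⁻¹ • y) = y := smul_inv_smul₀ (ne_of_gt hBpos) y
      rw [← hBy]
      exact Set.smul_mem_smul_set hw
    refine ⟨c, ⟨?_, hxU⟩⟩
    have hxsplit : c = y + (fun k => ((z k : ℤ) : ℝ)) := by
      funext k
      simp [hydef]
    rw [hxsplit]
    exact Set.add_mem_add hyS (fun j => ⟨z j, rfl⟩)
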